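/- The greedy rule f_U — which, given profile P, repeatedly deletes all minimum-weight edges from G(P) until a topological sort exists, and outputs such a sort — maximizes σ_U pointwise: for every voting rule g and every profile P, σ_U(f_U, P) ≥ σ_U(g, P). -/

import Mathlib

open scoped Classical

noncomputable section

/-- Relative ranking entry of voter `i` on the pair `(A,B)`. -/
def Xrel {V C : Type*} (P : V → C → C → Prop) (A B : C) (i : V) : ℝ :=
  if P i A B then 1 else if P i B A then 0 else 1/2

/-- The signed margin `(X_{A,B}(P) − X_{B,A}(P)) · 1` by which voters prefer `A` to `B`.
The pairwise comparison graph `G(P)` has an edge from `A` to `B` exactly when this is positive. -/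
def margin {V C : Type*} [Fintype V] (P : V → C → C → Prop) (A B : C) : ℝ :=
  ∑ i, (Xrel P A B i - Xrel P B A i)

/-- The alignment `I_{A,B}(f,P)`. -/
def align {V C : Type*} [Fintype V] (f : (V → C → C → Prop) → C → C → Prop)
    (P : V → C → C → Prop) (A B : C) : ℝ :=
  if f P A B then (∑ i, Xrel P A B i) / (Fintype.card V)
  else (∑ i, Xrel P B A i) / (Fintype.card V)

/-- The misalignment score `M(f,P)`: the minimum alignment over pairs of candidates. -/
def Mmin {V C : Type*} [Fintype V] (f : (V → C → C → Prop) → C → C → Prop)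
    (P : V → C → C → Prop) : ℝ :=
  sInf {x : ℝ | ∃ A B : C, A ≠ B ∧ x = align f P A B}

/-- `σ_U(f,P) = M/(1−M)` if `M(f,P) < 1/2`, and `1` otherwise. -/
def sigmaU {V C : Type*} [Fintype V] (f : (V → C → C → Prop) → C → C → Prop)
    (P : V → C → C → Prop) : ℝ :=
  if Mmin f P < 1/2 then Mmin f P / (1 - Mmin f P) else 1

/-- A directed graph (given as a relation) has a directed cycle. -/
def HasCycle {C : Type*} (e : C → C → Prop) : Prop :=
  ∃ (A : C) (l : List C), List.Chain e A (l ++ [A])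

/-- The weight threshold reached by the greedy algorithm on `G(P)`: repeatedly deleting all
minimum-weight edges until a topological sort exists leaves exactly the edges of weight
greater than `greedyThreshold P`, the least `w ≥ 0` for which the subgraph of edges of margin
greater than `w` is acyclic. -/
def greedyThreshold {V C : Type*} [Fintype V] (P : V → C → C → Prop) : ℝ :=
  sInf {w : ℝ | 0 ≤ w ∧ ¬ HasCycle (fun A B : C => w < margin P A B)}

/-- A chain from `a` ending at `b` yields `TransGen r a b`. -/
lemma chain_transGen {C : Type*} {r : C → C → Prop} :
    ∀ (l : List C) (a b : C), List.Chain r a (l ++ [b]) → Relation.TransGen r a b := by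
  intro l
  induction l with
  | nil =>
      intro a b h
      rw [List.nil_append, List.Chain, List.chain_cons] at h
      exact Relation.TransGen.single h.1
  | cons c l ih =>
      intro a b h
      rw [List.cons_append, List.Chain, List.chain_cons] at h
      exact Relation.TransGen.head h.1 (ih c b h.2)

lemma Xrel_nonneg {V C : Type*} (P : V → C → C → Prop) (A B : C) (i : V) :
    0 ≤ Xrel P A B i := by
  unfold Xrel; split_ifs <;> norm_num

lemma Xrel_le_one {V C : Type*} (P : V → C → C → Prop) (A B : C) (i : V) :
    Xrel P A B i ≤ 1 := by
  unfold Xrel; split_ifs <;> norm_num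

/-- The greedy rule `f_U` — outputting a topological sort of what remains of `G(P)` after
repeatedly deleting all minimum-weight edges until a topological sort exists (equivalently, a
complete ranking respecting every edge of margin above the greedy threshold) — maximizes
`σ_U` pointwise: for every voting rule `g` and every profile `P`,
`σ_U(f_U,P) ≥ σ_U(g,P)`. -/
theorem stmt15 {V C : Type*} [Fintype V] [Fintype C]
    (hn : 0 < Fintype.card V) (hC : 2 ≤ Fintype.card C)
    (fU : (V → C → C → Prop) → C → C → Prop)
    (hfU : ∀ P : V → C → C → Prop, IsStrictTotalOrder C (fU P) ∧
      ∀ A B : C, greedyThreshold P < margin P A B → fU P A B) :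
    ∀ (g : (V → C → C → Prop) → C → C → Prop) (P : V → C → C → Prop),
      (∀ i A B, ¬ (P i A B ∧ P i B A)) → IsStrictTotalOrder C (g P) →
      sigmaU g P ≤ sigmaU fU P := by
  intro g P hP hg
  set n : ℝ := (Fintype.card V : ℝ) with hn_def
  have hn' : (0:ℝ) < n := by rw [hn_def]; exact_mod_cast hn
  -- basic sum identities
  have hmargin : ∀ A B : C, margin P A B =
      (∑ i, Xrel P A B i) - (∑ i, Xrel P B A i) := by
    intro A B; unfold margin; rw [Finset.sum_sub_distrib]
  have hsum : ∀ A B : C, (∑ i, Xrel P A B i) + (∑ i, Xrel P B A i) = n := by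
    intro A B
    rw [← Finset.sum_add_distrib]
    have : ∀ i, Xrel P A B i + Xrel P B A i = 1 := by
      intro i
      have := hP i A B
      unfold Xrel
      split_ifs <;> first | (exact absurd (And.intro ‹_› ‹_›) this) | norm_num
    simp [this, hn_def]
  have hsumX : ∀ A B : C, (∑ i, Xrel P A B i) = (n + margin P A B) / 2 := by
    intro A B
    have h1 := hsum A B
    have h2 := hmargin A B
    linarith
  have hmargin_anti : ∀ A B : C, margin P B A = - margin P A B := by
    intro A B
    have h1 := hmargin A B
    have h2 := hmargin B A
    linarith
  have hmargin_self : ∀ A : C, margin P A A = 0 := by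
    intro A; unfold margin; simp
  have hmargin_le : ∀ A B : C, margin P A B ≤ n := by
    intro A B
    have h1 := hsumX A B
    have h2 : (0:ℝ) ≤ ∑ i, Xrel P B A i :=
      Finset.sum_nonneg fun i _ => Xrel_nonneg P B A i
    have h3 : (∑ i, Xrel P A B i) ≤ n := by
      calc (∑ i, Xrel P A B i) ≤ ∑ _i : V, (1:ℝ) :=
            Finset.sum_le_sum fun i _ => Xrel_le_one P A B i
        _ = n := by simp [hn_def]
    have := hmargin A B
    linarith
  -- align nonneg, and set membership infrastructure
  have halign_nonneg : ∀ (f : (V → C → C → Prop) → C → C → Prop) A B,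
      0 ≤ align f P A B := by
    intro f A B
    unfold align
    split_ifs <;>
      exact div_nonneg (Finset.sum_nonneg fun i _ => Xrel_nonneg P _ _ i) (by positivity)
  have hbdd : ∀ f : (V → C → C → Prop) → C → C → Prop,
      BddBelow {x : ℝ | ∃ A B : C, A ≠ B ∧ x = align f P A B} := by
    intro f
    exact ⟨0, fun x ⟨A, B, _, hx⟩ => hx ▸ halign_nonneg f A B⟩
  obtain ⟨A₀, B₀, hAB₀⟩ := Fintype.exists_pair_of_one_lt_card (by omega : 1 < Fintype.card C)
  have hne : ∀ f : (V → C → C → Prop) → C → C → Prop,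
      {x : ℝ | ∃ A B : C, A ≠ B ∧ x = align f P A B}.Nonempty :=
    fun f => ⟨align f P A₀ B₀, A₀, B₀, hAB₀, rfl⟩
  set t := greedyThreshold P with ht_def
  -- the defining set of the threshold is nonempty and bounded below
  have hTbdd : BddBelow {w : ℝ | 0 ≤ w ∧ ¬ HasCycle (fun A B : C => w < margin P A B)} :=
    ⟨0, fun w hw => hw.1⟩
  have hTne : {w : ℝ | 0 ≤ w ∧ ¬ HasCycle (fun A B : C => w < margin P A B)}.Nonempty := by
    refine ⟨n, le_of_lt hn', ?_⟩
    rintro ⟨A, l, hl⟩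
    cases l with
    | nil =>
        rw [List.nil_append, List.Chain, List.chain_cons] at hl
        exact absurd hl.1 (not_lt.2 (hmargin_le A A))
    | cons c l' =>
        rw [List.cons_append, List.Chain, List.chain_cons] at hl
        exact absurd hl.1 (not_lt.2 (hmargin_le A c))
  have ht0 : 0 ≤ t := le_csInf hTne fun w hw => hw.1
  -- fU respects all edges of margin above t, hence its alignments are ≥ (n - t)/(2n)
  have hMfU : (n - t) / (2 * n) ≤ Mmin fU P := by
    refine le_csInf (hne fU) ?_
    rintro x ⟨A, B, hAB, rfl⟩
    have key : ∀ X Y : C, fU P X Y → (n - t) / (2 * n) ≤ (∑ i, Xrel P X Y i) / n := by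
      intro X Y hXY
      have hm : margin P Y X ≤ t := by
        by_contra h
        push_neg at h
        have h2 := (hfU P).2 Y X h
        haveI := (hfU P).1
        exact irrefl_of (fU P) X (trans_of (fU P) hXY h2)
      have hm' : -t ≤ margin P X Y := by
        have := hmargin_anti X Y; linarith
      rw [hsumX X Y, div_le_div_iff₀ (by linarith) hn']
      ring_nf
      nlinarith
    unfold align
    split_ifs with h
    · exact key A B h
    · have hBA : fU P B A := by
        rcases (haveI := (hfU P).1; trichotomous_of (fU P) A B) with h1 | h1 | h1
        · exact absurd h1 h
        · exact absurd h1 hAB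
        · exact h1
      exact key B A hBA
  have hMg0 : 0 ≤ Mmin g P :=
    le_csInf (hne g) fun x ⟨A, B, _, hx⟩ => hx ▸ halign_nonneg g A B
  -- key comparison when the fU bound is informative
  have hkey : Mmin fU P < 1/2 → Mmin g P ≤ Mmin fU P := by
    intro hlt
    have htpos : 0 < t := by
      by_contra h
      push_neg at h
      have ht' : t = 0 := le_antisymm h ht0
      have heq : (n - t) / (2 * n) = 1/2 := by
        rw [ht']; field_simp; ring
      linarith
    -- pick the largest margin value (or 0) strictly below t
    classical
    set Fs : Finset ℝ :=
      (insert (0:ℝ) ((Finset.univ : Finset (C × C)).image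
        (fun p : C × C => margin P p.1 p.2))).filter (· < t) with hFs_def
    have h0mem : (0:ℝ) ∈ Fs := by
      rw [hFs_def, Finset.mem_filter]
      exact ⟨Finset.mem_insert_self _ _, htpos⟩
    set w0 : ℝ := Fs.max' ⟨0, h0mem⟩ with hw0_def
    have hw0mem : w0 ∈ Fs := Finset.max'_mem _ _
    have hw0lt : w0 < t := (Finset.mem_filter.1 hw0mem).2
    have hw0nonneg : 0 ≤ w0 := Finset.le_max' _ _ h0mem
    -- every edge above w0 has margin ≥ t
    have hgap : ∀ A B : C, w0 < margin P A B → t ≤ margin P A B := by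
      intro A B h
      by_contra h'
      push_neg at h'
      have hmem : margin P A B ∈ Fs := by
        rw [hFs_def, Finset.mem_filter]
        refine ⟨Finset.mem_insert_of_mem ?_, h'⟩
        exact Finset.mem_image.2 ⟨(A, B), Finset.mem_univ _, rfl⟩
      exact absurd (Finset.le_max' _ _ hmem) (not_le.2 h)
    -- the graph at threshold w0 has a cycle
    have hcyc : HasCycle (fun A B : C => w0 < margin P A B) := by
      by_contra hce
      have : t ≤ w0 := csInf_le hTbdd ⟨hw0nonneg, hce⟩
      linarith
    -- g must disagree with some edge of that cycle
    have hdis : ∃ X Y : C, w0 < margin P X Y ∧ ¬ g P X Y := by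
      by_contra h
      push_neg at h
      obtain ⟨A, l, hl⟩ := hcyc
      have hchain : List.Chain (g P) A (l ++ [A]) :=
        List.Chain.imp (fun a b hab => h a b hab) hl
      have htg : Relation.TransGen (g P) A A := chain_transGen l A A hchain
      haveI := hg
      have htrans : Transitive (g P) := fun {a b c} hab hbc => trans_of (g P) hab hbc
      have hAA : g P A A := by
        rw [Relation.transGen_eq_self] at htg
        exact htg
      exact irrefl_of (g P) A hAA
    obtain ⟨X, Y, hXY, hgXY⟩ := hdis
    have htXY : t ≤ margin P X Y := hgap X Y hXY
    have hXneY : X ≠ Y := by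
      intro h
      rw [h, hmargin_self] at htXY
      linarith
    have halignXY : align g P X Y ≤ (n - t) / (2 * n) := by
      unfold align
      rw [if_neg hgXY, hsumX Y X]
      have := hmargin_anti X Y
      rw [div_le_div_iff₀ hn' (by linarith)]
      nlinarith
    have : Mmin g P ≤ align g P X Y :=
      csInf_le (hbdd g) ⟨X, Y, hXneY, rfl⟩
    linarith
  -- conclude by monotonicity of x ↦ x/(1-x)
  unfold sigmaU
  by_cases hf : Mmin fU P < 1/2
  · have hle := hkey hf
    rw [if_pos hf, if_pos (lt_of_le_of_lt hle hf)]
    rw [div_le_div_iff₀ (by linarith) (by linarith)]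
    nlinarith
  · rw [if_neg hf]
    split_ifs with hgc
    · rw [div_le_one (by linarith)]
      linarith
    · exact le_refl 1
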